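/- Let α ∈ ℝ, σ² > 0, η, κ ≥ 0, and λ ≥ 0. Let P be the product of the Gaussian measure on ℝ with mean α and variance σ² and the Poisson distribution on ℕ with rate λ. Then ∫ (exp(y) + η·n + κ·λ)² dP(y, n) = exp(2α + 2σ²) + (η + κ)²·λ² + η²·λ + 2(η + κ)·exp(α + σ²/2)·λ. -/

import Mathlib

open MeasureTheory ProbabilityTheory Real

open scoped ENNReal NNReal

section SpingarchAux

lemma pmf_succ_mul (r : ℝ≥0) (n : ℕ) :
    ((n : ℝ) + 1) * poissonPMFReal r (n + 1) = r * poissonPMFReal r n := by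
  unfold poissonPMFReal
  rw [Nat.factorial_succ]
  have h1 : ((n.factorial : ℕ) : ℝ) ≠ 0 := Nat.cast_ne_zero.mpr n.factorial_ne_zero
  push_cast
  field_simp
  ring

lemma hasSum_poisson_id (r : ℝ≥0) :
    HasSum (fun n : ℕ => (n : ℝ) * poissonPMFReal r n) r := by
  have h : HasSum (fun n : ℕ => ((n + 1 : ℕ) : ℝ) * poissonPMFReal r (n + 1)) ((r : ℝ) * 1) := by
    have h2 := (poissonPMFRealSum r).mul_left (r : ℝ)
    convert h2 using 2 with n
    · rfl
    push_cast
    exact pmf_succ_mul r n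
  have h3 := (hasSum_nat_add_iff (f := fun n : ℕ => (n : ℝ) * poissonPMFReal r n) 1).mp h
  simpa using h3

lemma hasSum_poisson_sq (r : ℝ≥0) :
    HasSum (fun n : ℕ => ((n : ℝ))^2 * poissonPMFReal r n) ((r : ℝ) + (r : ℝ)^2) := by
  have h : HasSum (fun n : ℕ => (((n + 1 : ℕ) : ℝ))^2 * poissonPMFReal r (n + 1))
      ((r : ℝ) * (r : ℝ) + (r : ℝ) * 1) := by
    have h2 := ((hasSum_poisson_id r).mul_left (r : ℝ)).add
      ((poissonPMFRealSum r).mul_left (r : ℝ))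
    convert h2 using 2 with n
    · rfl
    push_cast
    have := pmf_succ_mul r n
    simp only [poissonPMFReal] at this ⊢
    nlinarith [this]
  have h3 := (hasSum_nat_add_iff (f := fun n : ℕ => ((n : ℝ))^2 * poissonPMFReal r n) 1).mp h
  have : (r : ℝ) * (r : ℝ) + (r : ℝ) = (r : ℝ) + (r : ℝ)^2 := by ring
  rw [← this]
  simpa using h3

lemma poisson_int (r : ℝ≥0) {f : ℕ → ℝ} (hf : ∀ n, 0 ≤ f n) {S : ℝ}
    (h : HasSum (fun n => f n * poissonPMFReal r n) S) :
    Integrable f (poissonMeasure r) ∧ ∫ n, f n ∂(poissonMeasure r) = S := by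
  have hS : 0 ≤ S := h.nonneg fun n => mul_nonneg (hf n) poissonPMFReal_nonneg
  have key : ∫⁻ n, ENNReal.ofReal (f n) ∂(poissonMeasure r) = ENNReal.ofReal S := by
    rw [lintegral_countable' (fun n => ENNReal.ofReal (f n))]
    have h1 : ∀ n : ℕ, poissonMeasure r {n} = ENNReal.ofReal (poissonPMFReal r n) := fun n =>
      by rw [poissonMeasure_singleton]; rfl
    calc ∑' n, ENNReal.ofReal (f n) * poissonMeasure r {n}
        = ∑' n, ENNReal.ofReal (f n * poissonPMFReal r n) := by
          refine tsum_congr fun n => ?_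
          rw [h1 n, ← ENNReal.ofReal_mul (hf n)]
      _ = ENNReal.ofReal S := by
          rw [← h.tsum_eq]
          exact (ENNReal.ofReal_tsum_of_nonneg
            (fun n => mul_nonneg (hf n) poissonPMFReal_nonneg) h.summable).symm
  have hmeas : Measurable f := by measurability
  have hint : Integrable f (poissonMeasure r) := by
    refine ⟨hmeas.aestronglyMeasurable, ?_⟩
    rw [hasFiniteIntegral_iff_norm]
    have : ∀ n, ENNReal.ofReal ‖f n‖ = ENNReal.ofReal (f n) := fun n => by
      rw [Real.norm_of_nonneg (hf n)]
    simp_rw [this, key]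
    exact ENNReal.ofReal_lt_top
  refine ⟨hint, ?_⟩
  rw [integral_eq_lintegral_of_nonneg_ae (ae_of_all _ hf) hmeas.aestronglyMeasurable, key,
    ENNReal.toReal_ofReal hS]

lemma gauss_key (a : ℝ) (v : ℝ≥0) (hv : v ≠ 0) (t : ℝ) (y : ℝ) :
    gaussianPDFReal a v y * rexp (t * y)
      = rexp (t * a + t ^ 2 * v / 2) * gaussianPDFReal (a + t * v) v y := by
  have hv' : (0 : ℝ) < v := lt_of_le_of_ne v.coe_nonneg (by exact_mod_cast hv.symm)
  have hv2 : (2 : ℝ) * v ≠ 0 := by positivity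
  have e : -(y - a) ^ 2 / (2 * v) + t * y
      = (t * a + t ^ 2 * v / 2) + -(y - (a + t * v)) ^ 2 / (2 * (v : ℝ)) := by
    field_simp
    ring
  unfold gaussianPDFReal
  rw [mul_assoc, ← Real.exp_add, e, Real.exp_add]
  ring

lemma gauss_int (a : ℝ) (v : ℝ≥0) (hv : v ≠ 0) (t : ℝ) :
    Integrable (fun y => rexp (t * y)) (gaussianReal a v) ∧
      ∫ y, rexp (t * y) ∂(gaussianReal a v) = rexp (t * a + t ^ 2 * v / 2) := by
  have hmeasd : Measurable fun y => (gaussianPDFReal a v y).toNNReal :=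
    (measurable_gaussianPDFReal a v).real_toNNReal
  have hmeq : gaussianReal a v
      = volume.withDensity (fun y => ((gaussianPDFReal a v y).toNNReal : ℝ≥0∞)) := by
    rw [gaussianReal_of_var_ne_zero a hv]
    rfl
  have hsmul : ∀ y : ℝ, (gaussianPDFReal a v y).toNNReal • rexp (t * y)
      = gaussianPDFReal a v y * rexp (t * y) := fun y => by
    rw [NNReal.smul_def, smul_eq_mul, Real.coe_toNNReal _ (gaussianPDFReal_nonneg a v y)]
  have hint : Integrable (fun y => gaussianPDFReal a v y * rexp (t * y)) volume := by
    simp_rw [fun y => gauss_key a v hv t y]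
    exact (integrable_gaussianPDFReal (a + t * v) v).const_mul _
  constructor
  · rw [hmeq, integrable_withDensity_iff_integrable_smul hmeasd]
    simpa only [hsmul] using hint
  · rw [hmeq, integral_withDensity_eq_integral_smul hmeasd]
    simp_rw [hsmul, fun y => gauss_key a v hv t y]
    rw [integral_const_mul, integral_gaussianPDFReal_eq_one (a + t * v) hv, mul_one]

end SpingarchAux

/-- One-step conditional second moment of the SPINGARCH(1,1) intensity: if `Y` is
Gaussian with mean `α` and variance `σ²`, independent of `Z` Poisson with rate `λ`, then
`E[(exp(Y) + η·Z + κ·λ)²] = exp(2α + 2σ²) + (η+κ)²λ² + η²λ + 2(η+κ)exp(α + σ²/2)λ`. -/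
theorem spingarch_one_step_second_moment (α σ2 : ℝ) (hσ2 : 0 < σ2)
    (η κ lam : ℝ) (hη : 0 ≤ η) (hκ : 0 ≤ κ) (hlam : 0 ≤ lam) :
    ∫ p : ℝ × ℕ, (Real.exp p.1 + η * (p.2 : ℝ) + κ * lam) ^ 2
        ∂((gaussianReal α σ2.toNNReal).prod (poissonMeasure lam.toNNReal))
      = Real.exp (2 * α + 2 * σ2) + (η + κ) ^ 2 * lam ^ 2 + η ^ 2 * lam
        + 2 * (η + κ) * Real.exp (α + σ2 / 2) * lam := by
  set v : ℝ≥0 := σ2.toNNReal with hvdef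
  set r : ℝ≥0 := lam.toNNReal with hrdef
  have hv : v ≠ 0 := (Real.toNNReal_pos.mpr hσ2).ne'
  have vc : ((v : ℝ≥0) : ℝ) = σ2 := Real.coe_toNNReal _ hσ2.le
  have rc : ((r : ℝ≥0) : ℝ) = lam := Real.coe_toNNReal _ hlam
  set μ := gaussianReal α v
  set ν := poissonMeasure r
  set c : ℝ := κ * lam with hcdef
  obtain ⟨G1i, G1⟩ := gauss_int α v hv 1
  obtain ⟨G2i, G2⟩ := gauss_int α v hv 2
  obtain ⟨P1i, P1⟩ := poisson_int r (f := fun n : ℕ => (n : ℝ))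
    (fun n => Nat.cast_nonneg n) (hasSum_poisson_id r)
  obtain ⟨P2i, P2⟩ := poisson_int r (f := fun n : ℕ => ((n : ℝ))^2)
    (fun n => sq_nonneg _) (hasSum_poisson_sq r)
  have hE : (fun p : ℝ × ℕ => (Real.exp p.1 + η * (p.2 : ℝ) + κ * lam) ^ 2)
      = fun p : ℝ × ℕ => (fun y => rexp (2 * y)) p.1 * (fun _ : ℕ => (1 : ℝ)) p.2
        + ((fun y => rexp (1 * y)) p.1 * (fun n : ℕ => 2 * η * (n : ℝ) + 2 * c) p.2
          + (fun _ : ℝ => (1 : ℝ)) p.1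
            * (fun n : ℕ => η ^ 2 * ((n : ℝ))^2 + (2 * η * c) * (n : ℝ) + c ^ 2) p.2) := by
    funext p
    simp only [hcdef]
    rw [two_mul, Real.exp_add, one_mul]
    ring
  have Ig2 : Integrable (fun n : ℕ => 2 * η * (n : ℝ) + 2 * c) ν :=
    (P1i.const_mul (2 * η)).add (integrable_const (2 * c))
  have Ig3 : Integrable (fun n : ℕ => η ^ 2 * ((n : ℝ))^2 + (2 * η * c) * (n : ℝ) + c ^ 2) ν :=
    ((P2i.const_mul (η ^ 2)).add (P1i.const_mul (2 * η * c))).add (integrable_const (c ^ 2))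
  have I1 : Integrable
      (fun p : ℝ × ℕ => (fun y => rexp (2 * y)) p.1 * (fun _ : ℕ => (1 : ℝ)) p.2) (μ.prod ν) :=
    G2i.mul_prod (integrable_const 1)
  have I2 : Integrable
      (fun p : ℝ × ℕ => (fun y => rexp (1 * y)) p.1
        * (fun n : ℕ => 2 * η * (n : ℝ) + 2 * c) p.2) (μ.prod ν) :=
    G1i.mul_prod Ig2
  have I3 : Integrable
      (fun p : ℝ × ℕ => (fun _ : ℝ => (1 : ℝ)) p.1
        * (fun n : ℕ => η ^ 2 * ((n : ℝ))^2 + (2 * η * c) * (n : ℝ) + c ^ 2) p.2) (μ.prod ν) :=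
    (integrable_const 1).mul_prod Ig3
  have I23 : Integrable
      (fun p : ℝ × ℕ => (fun y => rexp (1 * y)) p.1
          * (fun n : ℕ => 2 * η * (n : ℝ) + 2 * c) p.2
        + (fun _ : ℝ => (1 : ℝ)) p.1
          * (fun n : ℕ => η ^ 2 * ((n : ℝ))^2 + (2 * η * c) * (n : ℝ) + c ^ 2) p.2)
      (μ.prod ν) := I2.add I3
  rw [hE, integral_add I1 I23, integral_add I2 I3]
  rw [integral_prod_mul (μ := μ) (ν := ν) (fun y => rexp (2 * y)) (fun _ : ℕ => (1 : ℝ))]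
  rw [integral_prod_mul (μ := μ) (ν := ν) (fun y => rexp (1 * y))
    (fun n : ℕ => 2 * η * (n : ℝ) + 2 * c)]
  rw [integral_prod_mul (μ := μ) (ν := ν) (fun _ : ℝ => (1 : ℝ))
    (fun n : ℕ => η ^ 2 * ((n : ℝ))^2 + (2 * η * c) * (n : ℝ) + c ^ 2)]
  have hν1 : ∫ _ : ℕ, (1 : ℝ) ∂ν = 1 := by
    simp [measure_univ]
  have hμ1 : ∫ _ : ℝ, (1 : ℝ) ∂μ = 1 := by
    simp [measure_univ]
  have hg2 : ∫ n : ℕ, (2 * η * (n : ℝ) + 2 * c) ∂ν = 2 * η * lam + 2 * c := by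
    rw [integral_add (P1i.const_mul (2 * η)) (integrable_const (2 * c)),
      integral_const_mul, P1, rc]
    simp [measure_univ]
  have hg3 : ∫ n : ℕ, (η ^ 2 * ((n : ℝ))^2 + (2 * η * c) * (n : ℝ) + c ^ 2) ∂ν
      = η ^ 2 * (lam + lam ^ 2) + (2 * η * c) * lam + c ^ 2 := by
    have Ia : Integrable (fun n : ℕ => η ^ 2 * ((n : ℝ))^2 + (2 * η * c) * (n : ℝ)) ν :=
      (P2i.const_mul (η ^ 2)).add (P1i.const_mul (2 * η * c))
    rw [integral_add Ia (integrable_const (c ^ 2)),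
      integral_add (P2i.const_mul (η ^ 2)) (P1i.const_mul (2 * η * c)),
      integral_const_mul, integral_const_mul, P1, P2, rc]
    simp [measure_univ]
  have e2 : (2 : ℝ) * α + 2 ^ 2 * (v : ℝ) / 2 = 2 * α + 2 * σ2 := by rw [vc]; ring
  have e1 : (1 : ℝ) * α + 1 ^ 2 * (v : ℝ) / 2 = α + σ2 / 2 := by rw [vc]; ring
  rw [G1, G2, hν1, hμ1, hg2, hg3, e1, e2, hcdef]
  ring
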